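/- Let s and t be coprime integers greater than 1. Then exactly half of the integers in {1, 2, …, (s−1)(t−1)} belong to P_{s,t}; that is, |P_{s,t} ∩ {1,…,(s−1)(t−1)}| = (s−1)(t−1)/2. -/

import Mathlib

/-- A partition: a weakly decreasing sequence of natural numbers (indexed from 0)
that is eventually zero.  `parts i` is the (i+1)-st largest part (0 if `i` exceeds
the number of parts). -/
structure NPartition where
  parts : ℕ → ℕ
  antitone : ∀ ⦃i j : ℕ⦄, i ≤ j → parts j ≤ parts i
  eventually_zero : ∃ N, ∀ i, N ≤ i → parts i = 0

namespace NPartition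

/-- The size of a partition: the sum of its parts. -/
noncomputable def size (lam : NPartition) : ℕ := ∑ᶠ i, lam.parts i

/-- The number of (positive) parts of a partition. -/
noncomputable def numParts (lam : NPartition) : ℕ := sInf {N | lam.parts N = 0}

/-- The conjugate partition: `conj.parts j` is the number of rows whose part exceeds `j`,
i.e. the length of column `j` of the Young diagram. -/
noncomputable def conj (lam : NPartition) : NPartition where
  parts := fun j => ((Finset.range lam.numParts).filter (fun i => j < lam.parts i)).card
  antitone := by
    intro a b hab
    apply Finset.card_le_card
    intro x hx
    simp only [Finset.mem_filter] at hx ⊢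
    exact ⟨hx.1, lt_of_le_of_lt hab hx.2⟩
  eventually_zero := by
    refine ⟨lam.parts 0, fun j hj => ?_⟩
    simp only [Finset.card_eq_zero, Finset.filter_eq_empty_iff]
    intro i _
    exact not_lt.mpr (le_trans (lam.antitone (Nat.zero_le i)) hj)

/-- The hook length of the box in row `i`, column `j` (both 0-indexed) of the Young
diagram: arm + leg + 1. -/
noncomputable def hookLength (lam : NPartition) (i j : ℕ) : ℕ :=
  (lam.parts i - (j + 1)) + (lam.conj.parts j - (i + 1)) + 1

/-- `lam` is an `s`-core: no box of its Young diagram has hook length `s`. -/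
noncomputable def IsCore (s : ℕ) (lam : NPartition) : Prop :=
  ∀ i j, j < lam.parts i → lam.hookLength i j ≠ s

/-- The empty partition. -/
def emptyP : NPartition := ⟨fun _ => 0, fun _ _ _ => le_rfl, ⟨0, fun _ _ => rfl⟩⟩

/-- The parts of the partition obtained from `lam` by removing the (rim) hook with
corner box `(i, j)` (0-indexed). -/
noncomputable def removeHookParts (lam : NPartition) (i j : ℕ) : ℕ → ℕ := fun r =>
  if r < i then lam.parts r
  else if r + 1 < lam.conj.parts j then lam.parts (r + 1) - 1
  else if r + 1 = lam.conj.parts j then j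
  else lam.parts r

/-- `mu` is obtained from `lam` by removing a single hook of length `s`. -/
noncomputable def RemoveHookStep (s : ℕ) (lam mu : NPartition) : Prop :=
  ∃ i j, j < lam.parts i ∧ lam.hookLength i j = s ∧
    ∀ r, mu.parts r = lam.removeHookParts i j r

/-- `core` is the `s`-core of `lam`: it is obtained from `lam` by repeatedly removing
hooks of length `s`, and no hook of length `s` remains. -/
noncomputable def HasSCore (s : ℕ) (lam core : NPartition) : Prop :=
  Relation.ReflTransGen (RemoveHookStep s) lam core ∧ IsCore s core

/-- The bead-set of `lam` with shift `k`: the set `{0, …, k-1} ∪ {h + k : h a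
first-column hook length of `lam`}`.  (The first-column hook length of row `i`
(0-indexed) is `parts i + (m - (i+1))` where `m` is the number of parts.) -/
noncomputable def beadSet (lam : NPartition) (k : ℕ) : Finset ℕ :=
  Finset.range k ∪ (Finset.range lam.numParts).image
    (fun i => lam.parts i + (lam.numParts - (i + 1)) + k)

/-- `X` is a bead-set for `lam`. -/
noncomputable def IsBeadSet (lam : NPartition) (X : Finset ℕ) : Prop :=
  ∃ k, X = lam.beadSet k

/-- The minimal bead-set of `lam` (shift `k = 0`), i.e. its set of first-column
hook lengths. -/
noncomputable def minBeadSet (lam : NPartition) : Finset ℕ := lam.beadSet 0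

/-- `X` is the bead-set of `lam` normalized with respect to `s`: the size of `X`
is divisible by `s`, with the least possible shift `k`. -/
noncomputable def IsNormalizedBeadSet (s : ℕ) (lam : NPartition) (X : Finset ℕ) : Prop :=
  ∃ k, X = lam.beadSet k ∧ (lam.beadSet k).card % s = 0 ∧
    ∀ k' < k, (lam.beadSet k').card % s ≠ 0

end NPartition

/-- Runner `i` of the `s`-abacus of the bead-set `X`:  `X_i = {j : i + j·s ∈ X}`. -/
def runner (s i : ℕ) (X : Finset ℕ) : Finset ℕ :=
  (Finset.range (X.sup id + 1)).filter (fun j => i + j * s ∈ X)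

/-- The staircase partition `τ_ℓ = (ℓ, ℓ-1, …, 1)`. -/
def staircase (l : ℕ) : NPartition :=
  ⟨fun i => l - i, fun _ _ hij => Nat.sub_le_sub_left hij l,
   ⟨l, fun i hi => Nat.sub_eq_zero_of_le hi⟩⟩

/-- `P_{s,t}`: the set of positive integers not expressible as a nonnegative integer
combination of `s` and `t`. -/
def Pst (s t : ℕ) : Set ℕ := {n | 0 < n ∧ ¬ ∃ a b : ℕ, n = a * s + b * t}



lemma repZ_symm (s t : ℤ) (hs : 1 < s) (ht : 1 < t) (hco : IsCoprime s t) (n : ℤ) :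
    (∃ a b : ℤ, 0 ≤ a ∧ 0 ≤ b ∧ n = a * s + b * t) ↔
      ¬(∃ a b : ℤ, 0 ≤ a ∧ 0 ≤ b ∧ s * t - s - t - n = a * s + b * t) := by
  constructor
  · rintro ⟨a, b, ha, hb, rfl⟩ ⟨c, d, hc, hd, h⟩
    have hst : s * t = (a + c + 1) * s + (b + d + 1) * t := by ring_nf; ring_nf at h; linarith
    have hsd : s ∣ (b + d + 1) * t := ⟨t - a - c - 1, by linarith [hst]⟩
    have hsd' : s ∣ b + d + 1 := (IsCoprime.dvd_of_dvd_mul_right hco hsd)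
    have htd : t ∣ (a + c + 1) * s := ⟨s - b - d - 1, by linarith [hst]⟩
    have htd' : t ∣ a + c + 1 := (IsCoprime.dvd_of_dvd_mul_right hco.symm htd)
    have h1 : s ≤ b + d + 1 := Int.le_of_dvd (by linarith) hsd'
    have h2 : t ≤ a + c + 1 := Int.le_of_dvd (by linarith) htd'
    nlinarith
  · intro h
    by_contra hn
    apply h
    obtain ⟨u, v, huv⟩ := hco
    set a : ℤ := (u * n) % t with ha
    set q : ℤ := (u * n) / t with hq
    have hqa : q * t + a = u * n := by have := Int.emod_add_mul_ediv (u * n) t; linarith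
    have ha0 : 0 ≤ a := Int.emod_nonneg _ (by linarith)
    have hat : a < t := Int.emod_lt_of_pos _ (by linarith)
    have hn' : n = a * s + (q * s + v * n) * t := by
      linear_combination n * huv.symm + s * hqa.symm
    set b : ℤ := q * s + v * n with hb
    have hbneg : b < 0 := by
      by_contra hb0
      exact hn ⟨a, b, ha0, le_of_not_gt hb0, hn'⟩
    exact ⟨t - 1 - a, -b - 1, by linarith, by linarith, by linarith [hn']⟩

lemma repN_iff_repZ (s t n : ℕ) :
    (∃ a b : ℕ, n = a * s + b * t) ↔
      (∃ a b : ℤ, 0 ≤ a ∧ 0 ≤ b ∧ (n : ℤ) = a * s + b * t) := by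
  constructor
  · rintro ⟨a, b, rfl⟩
    exact ⟨a, b, by positivity, by positivity, by push_cast; ring⟩
  · rintro ⟨a, b, ha, hb, hab⟩
    refine ⟨a.toNat, b.toNat, ?_⟩
    have : (n : ℤ) = (a.toNat : ℤ) * s + (b.toNat : ℤ) * t := by
      rw [Int.toNat_of_nonneg ha, Int.toNat_of_nonneg hb]; exact hab
    exact_mod_cast this


theorem half_of_interval_in_P' (s t : ℕ) (hs : 1 < s) (ht : 1 < t)
    (hco : Nat.Coprime s t) :
    ({n | 0 < n ∧ ¬ ∃ a b : ℕ, n = a * s + b * t} ∩ Set.Icc 1 ((s - 1) * (t - 1))).ncard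
      = (s - 1) * (t - 1) / 2 := by
  classical
  have hcoZ : IsCoprime (s : ℤ) (t : ℤ) := Int.isCoprime_iff_gcd_eq_one.mpr hco
  set F : ℕ := s * t - s - t with hFdef
  have hst : s + t ≤ s * t := by nlinarith
  have hFZ : (F : ℤ) = (s : ℤ) * t - s - t := by
    have h3 : s ≤ s * t := Nat.le_mul_of_pos_right s (by omega)
    have h4 : t ≤ s * t - s := by omega
    push_cast [hFdef, h3, h4]
    ring
  have hF1 : (s - 1) * (t - 1) = F + 1 := by
    have h1 : 1 ≤ s := hs.le
    have h2 : 1 ≤ t := ht.le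
    zify [h1, h2]
    rw [hFZ]
    ring
  -- key : for n ≤ F, rep n ↔ ¬ rep (F - n)
  set rep : ℕ → Prop := fun n => ∃ a b : ℕ, n = a * s + b * t with hrep
  have key : ∀ n ≤ F, (rep n ↔ ¬ rep (F - n)) := by
    intro n hn
    simp only [hrep]
    rw [repN_iff_repZ, repN_iff_repZ,
      repZ_symm (s : ℤ) t (by exact_mod_cast hs) (by exact_mod_cast ht) hcoZ (n : ℤ)]
    have : ((F - n : ℕ) : ℤ) = (s : ℤ) * t - s - t - n := by
      rw [Nat.cast_sub hn, hFZ]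
    rw [this]
  have hrepF1 : rep (F + 1) := by
    simp only [hrep]
    rw [repN_iff_repZ]
    have := (repZ_symm (s : ℤ) t (by exact_mod_cast hs) (by exact_mod_cast ht) hcoZ (-1)).not_left
    -- ¬ repZ (-1)
    have hneg : ¬ (∃ a b : ℤ, 0 ≤ a ∧ 0 ≤ b ∧ (-1 : ℤ) = a * s + b * t) := by
      rintro ⟨a, b, ha, hb, hab⟩
      nlinarith
    have hrepz := (repZ_symm (s : ℤ) t (by exact_mod_cast hs) (by exact_mod_cast ht) hcoZ (-1))
    have : ∃ a b : ℤ, 0 ≤ a ∧ 0 ≤ b ∧ (s : ℤ) * t - s - t - (-1) = a * s + b * t := by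
      by_contra hc
      exact hneg (hrepz.mpr hc)
    obtain ⟨a, b, ha, hb, hab⟩ := this
    exact ⟨a, b, ha, hb, by push_cast [hFZ]; linarith⟩
  set B : Finset ℕ := (Finset.range (F + 1)).filter (fun n => ¬ rep n) with hB
  set C : Finset ℕ := (Finset.range (F + 1)).filter (fun n => rep n) with hC
  have hBC : B.card = C.card := by
    apply Finset.card_bij' (fun n _ => F - n) (fun m _ => F - m)
    · intro n hn
      simp only [hB, hC, Finset.mem_filter, Finset.mem_range] at hn ⊢
      refine ⟨by omega, ?_⟩
      have h2 := key (F - n) (by omega)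
      rw [show F - (F - n) = n by omega] at h2
      exact h2.mpr hn.2
    · intro m hm
      simp only [hB, hC, Finset.mem_filter, Finset.mem_range] at hm ⊢
      refine ⟨by omega, ?_⟩
      exact (key m (by omega)).mp hm.2
    · intro n hn
      simp only [hB, Finset.mem_filter, Finset.mem_range] at hn
      omega
    · intro m hm
      simp only [hC, Finset.mem_filter, Finset.mem_range] at hm
      omega
  have hsum : C.card + B.card = F + 1 := by
    rw [hB, hC]
    rw [Finset.card_filter_add_card_filter_not]
    exact Finset.card_range (F + 1)
  -- identify the set with B
  have hset : {n | 0 < n ∧ ¬ rep n} ∩ Set.Icc 1 ((s - 1) * (t - 1)) = ↑B := by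
    ext n
    simp only [hB, Set.mem_inter_iff, Set.mem_setOf_eq, Set.mem_Icc, Finset.coe_filter,
      Finset.mem_range, Set.mem_setOf_eq, hF1]
    constructor
    · rintro ⟨⟨hpos, hnr⟩, h1, h2⟩
      refine ⟨?_, hnr⟩
      rcases Nat.lt_or_ge n (F + 1) with h | h
      · exact h
      · exfalso; apply hnr
        have : n = F + 1 := by omega
        rw [this]; exact hrepF1
    · rintro ⟨hlt, hnr⟩
      have hpos : 0 < n := by
        rcases Nat.eq_zero_or_pos n with rfl | h
        · exact absurd ⟨0, 0, by simp⟩ hnr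
        · exact h
      exact ⟨⟨hpos, hnr⟩, hpos, by omega⟩
  rw [hset, Set.ncard_coe_finset]
  omega

/-- Let `s, t` be coprime integers greater than 1.  Then exactly half of
the integers in `{1, …, (s-1)(t-1)}` belong to `P_{s,t}`. -/
theorem half_of_interval_in_P (s t : ℕ) (hs : 1 < s) (ht : 1 < t)
    (hco : Nat.Coprime s t) :
    (Pst s t ∩ Set.Icc 1 ((s - 1) * (t - 1))).ncard = (s - 1) * (t - 1) / 2 := by
  exact half_of_interval_in_P' s t hs ht hco
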